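/- The spectrum of op_N(a) defined above consists exactly of the N values (νℓ/N)² for ν ∈ ℤ with -N/2 ≤ ν < N/2; in particular inf σ(op_N(a)) = 0 and sup σ(op_N(a)) = ℓ²/4 if N is even and (ℓ²/4)((N-1)/N)² if N is odd. -/

import Mathlib

open Real Complex


/-- The matrix of op_N(a) = ℓ²/12 · I + (ℓ²/(2π²)) ∑_{n≥1}((-1)ⁿ/n²)(T^{n,0}+T^{-n,0}),
using (T^{n,0})_{k,l} = δ_{k+n,l}. -/
noncomputable def opAMat (N : ℕ) [NeZero N] (ℓ : ℝ) : Matrix (ZMod N) (ZMod N) ℂ :=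
  fun k l => ((ℓ^2/12 : ℝ) : ℂ) * (if k = l then 1 else 0)
    + ((ℓ^2/(2*Real.pi^2) : ℝ) : ℂ) * ∑' n : ℕ,
        ((-1 : ℂ)^(n+1) / ((n : ℂ)+1)^2) *
          ((if k + ((n+1 : ℕ) : ZMod N) = l then 1 else 0)
            + (if k - ((n+1 : ℕ) : ZMod N) = l then 1 else 0))

namespace SpecOpA

lemma bern2 (x : ℝ) : (Polynomial.map (algebraMap ℚ ℝ) (Polynomial.bernoulli 2)).eval x
    = x^2 - x + 1/6 := by
  simp [Polynomial.bernoulli, Finset.sum_range_succ]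
  ring

lemma cos_sum (x : ℝ) (hx : x ∈ Set.Icc (0:ℝ) 1) :
    HasSum (fun n : ℕ => 1 / (n : ℝ) ^ 2 * Real.cos (2 * π * n * x))
      (π^2 * (x^2 - x + 1/6)) := by
  have := hasSum_one_div_nat_pow_mul_cos (k := 1) one_ne_zero hx
  rw [bern2] at this
  norm_num at this ⊢
  convert this using 2
  ring

lemma cos_alt_sum {θ : ℝ} (hθ : θ ∈ Set.Icc (-π) π) :
    HasSum (fun n : ℕ => (-1 : ℝ)^n / (n : ℝ) ^ 2 * Real.cos (n * θ))
      (θ^2/4 - π^2/12) := by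
  have hπ := Real.pi_pos
  have hx : θ/(2*π) + 1/2 ∈ Set.Icc (0:ℝ) 1 := by
    have h1 := (div_le_div_iff_of_pos_right (by positivity : (0:ℝ) < 2*π)).mpr hθ.1
    have h2 := (div_le_div_iff_of_pos_right (by positivity : (0:ℝ) < 2*π)).mpr hθ.2
    have e1 : -π/(2*π) = -(1/2) := by rw [div_eq_iff (by positivity)]; ring
    have e2 : π/(2*π) = 1/2 := by rw [div_eq_iff (by positivity)]; ring
    constructor
    · rw [e1] at h1; linarith
    · rw [e2] at h2; linarith
  have h := cos_sum _ hx
  have heq : ∀ n : ℕ, 1 / (n : ℝ) ^ 2 * Real.cos (2 * π * n * (θ/(2*π) + 1/2))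
      = (-1 : ℝ)^n / (n : ℝ) ^ 2 * Real.cos (n * θ) := by
    intro n
    have : 2 * π * n * (θ/(2*π) + 1/2) = n * θ + n * π := by
      field_simp
    rw [this, Real.cos_add_nat_mul_pi]
    ring
  have hval : π^2 * ((θ/(2*π) + 1/2)^2 - (θ/(2*π) + 1/2) + 1/6) = θ^2/4 - π^2/12 := by
    field_simp; ring
  rw [← hval]
  exact h.congr_fun fun n => (heq n).symm

noncomputable def zet (N : ℕ) : ℂ := Complex.exp (2 * Real.pi * Complex.I / N)

noncomputable def chi (N : ℕ) [NeZero N] (m : ZMod N) : ℂ := zet N ^ m.val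

variable (N : ℕ) [NeZero N]

lemma primRoot : IsPrimitiveRoot (zet N) N :=
  Complex.isPrimitiveRoot_exp N (NeZero.ne N)

lemma zet_pow_mod (m : ℕ) : zet N ^ (m % N) = zet N ^ m := by
  conv_rhs => rw [← Nat.mod_add_div m N]
  rw [pow_add, pow_mul, (primRoot N).pow_eq_one, one_pow, mul_one]

lemma chi_add (a b : ZMod N) : chi N (a + b) = chi N a * chi N b := by
  rw [chi, chi, chi, ZMod.val_add, zet_pow_mod, ← pow_add]

lemma chi_natCast (n : ℕ) : chi N ((n : ZMod N)) = zet N ^ n := by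
  rw [chi, ZMod.val_natCast, zet_pow_mod]

lemma chi_zero : chi N 0 = 1 := by
  simp [chi]

lemma chi_neg_mul (a : ZMod N) : chi N a * chi N (-a) = 1 := by
  rw [← chi_add, add_neg_cancel, chi_zero]

lemma chi_inj : Function.Injective (chi N) := by
  intro a b hab
  have := (primRoot N).pow_inj (ZMod.val_lt a) (ZMod.val_lt b) hab
  exact ZMod.val_injective N this

lemma chi_int (μ : ℤ) :
    chi N ((μ : ZMod N)) = Complex.exp ((2 * Real.pi * μ / N : ℝ) * Complex.I) := by
  set v := ((μ : ZMod N)).val with hv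
  have h1 : ((v : ℤ) : ZMod N) = (μ : ZMod N) := by
    push_cast
    simp [hv, ZMod.natCast_val, ZMod.cast_id]
  obtain ⟨t, ht⟩ : (N : ℤ) ∣ ((v : ℤ) - μ) := by
    rwa [← ZMod.intCast_zmod_eq_zero_iff_dvd, Int.cast_sub, sub_eq_zero]
  have hNC : (N : ℂ) ≠ 0 := by exact_mod_cast (NeZero.ne N)
  have h2 : chi N ((μ:ZMod N)) = Complex.exp (v * (2*Real.pi*Complex.I/N)) := by
    rw [chi, zet, ← Complex.exp_nat_mul, ← hv]
  have hvC : (v : ℂ) = μ + N * t := by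
    have : (v : ℤ) = μ + N * t := by linarith
    exact_mod_cast congrArg (Int.cast : ℤ → ℂ) this
  rw [h2, hvC]
  have h3 : (↑μ + ↑N * ↑t) * (2 * ↑Real.pi * Complex.I / ↑N)
      = ((2 * Real.pi * μ / N : ℝ) : ℂ) * Complex.I + (t : ℤ) * (2 * ↑Real.pi * Complex.I) := by
    push_cast
    field_simp
  rw [h3, Complex.exp_add, Complex.exp_int_mul_two_pi_mul_I, mul_one]

lemma chi_norm (m : ZMod N) : ‖chi N m‖ = 1 := by
  have hz : ‖zet N‖ = 1 := by
    rw [zet, Complex.norm_exp]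
    have : (2 * ↑Real.pi * Complex.I / ↑N).re = 0 := by
      simp [Complex.div_re]
    rw [this, Real.exp_zero]
  rw [chi, norm_pow, hz, one_pow]

noncomputable def eV (ν : ZMod N) : ZMod N → ℂ := fun k => chi N (ν * k)

lemma eV_ne_zero (ν : ZMod N) : eV N ν ≠ 0 := by
  intro h
  have h0 := congrFun h 0
  simp only [eV, mul_zero, chi_zero, Pi.zero_apply] at h0
  exact one_ne_zero h0

lemma eV_norm (ν k : ZMod N) : ‖eV N ν k‖ = 1 := chi_norm N _

noncomputable def Sh : Module.End ℂ (ZMod N → ℂ) where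
  toFun f := fun k => f (k + 1)
  map_add' f g := rfl
  map_smul' c f := rfl

lemma sh_eigen (ν : ZMod N) : Module.End.HasEigenvector (Sh N) (chi N ν) (eV N ν) := by
  constructor
  · rw [Module.End.mem_eigenspace_iff]
    funext k
    show eV N ν (k + 1) = (chi N ν • eV N ν) k
    rw [eV, mul_add, mul_one, chi_add]
    simp [eV, mul_comm]
  · exact eV_ne_zero N ν

lemma eV_li : LinearIndependent ℂ (eV N) :=
  (Sh N).eigenvectors_linearIndependent' (chi N) (chi_inj N) _ (sh_eigen N)

noncomputable def eBasis : Module.Basis (ZMod N) ℂ (ZMod N → ℂ) :=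
  basisOfLinearIndependentOfCardEqFinrank (eV_li N)
    (by simp [Module.finrank_pi, ZMod.card])

lemma eBasis_apply (ν : ZMod N) : eBasis N ν = eV N ν := by
  rw [eBasis, coe_basisOfLinearIndependentOfCardEqFinrank]

noncomputable def lam (ℓ : ℝ) (ν : ZMod N) : ℂ :=
  ((ℓ^2/12 : ℝ) : ℂ) + ((ℓ^2/(2*Real.pi^2) : ℝ) : ℂ) * ∑' n : ℕ,
    ((-1 : ℂ)^(n+1) / ((n : ℂ)+1)^2) *
      (chi N (ν * ((n+1 : ℕ) : ZMod N)) + chi N (-(ν * ((n+1 : ℕ) : ZMod N))))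

lemma summable_aux (w : ℕ → ℂ) (C : ℝ) (hw : ∀ n, ‖w n‖ ≤ C) :
    Summable (fun n : ℕ => ((-1 : ℂ)^(n+1) / ((n : ℂ)+1)^2) * w n) := by
  have hs : Summable (fun n : ℕ => C * (1/((n:ℝ)+1)^2)) := by
    apply Summable.mul_left
    have h1 := (Real.summable_one_div_nat_pow (p := 2)).2 (by norm_num)
    have h2 := (summable_nat_add_iff 1).2 h1
    apply h2.congr
    intro n
    push_cast
    ring
  apply Summable.of_norm
  apply hs.of_nonneg_of_le (fun n => norm_nonneg _)
  intro n
  simp only [norm_mul, norm_div, norm_pow, norm_neg, norm_one, one_pow]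
  have h1 : ‖((n:ℂ)+1)‖ = ((n:ℝ)+1) := by
    have : ((n:ℂ)+1) = ((n+1 : ℕ) : ℂ) := by push_cast; ring
    rw [this, Complex.norm_natCast]
    push_cast; ring
  rw [h1]
  have hb : (0:ℝ) ≤ 1/((n:ℝ)+1)^2 := by positivity
  calc 1/((n:ℝ)+1)^2 * ‖w n‖ ≤ 1/((n:ℝ)+1)^2 * C := by
        apply mul_le_mul_of_nonneg_left (hw n) hb
    _ = C * (1/((n:ℝ)+1)^2) := by ring

lemma eV_add (ν k m : ZMod N) : eV N ν (k + m) = eV N ν k * chi N (ν * m) := by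
  show chi N (ν * (k + m)) = chi N (ν * k) * chi N (ν * m)
  rw [mul_add, chi_add]

lemma eV_sub (ν k m : ZMod N) : eV N ν (k - m) = eV N ν k * chi N (-(ν * m)) := by
  show chi N (ν * (k - m)) = chi N (ν * k) * chi N (-(ν * m))
  rw [sub_eq_add_neg, mul_add, chi_add, mul_neg]

lemma mulVec_eV (ℓ : ℝ) (ν : ZMod N) :
    (opAMat N ℓ).mulVec (eV N ν) = lam N ℓ ν • eV N ν := by
  funext k
  set c := ((ℓ^2/12 : ℝ) : ℂ) with hc
  set d := ((ℓ^2/(2*Real.pi^2) : ℝ) : ℂ) with hd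
  set a : ℕ → ℂ := fun n => ((-1 : ℂ)^(n+1) / ((n : ℂ)+1)^2) with ha
  have hsum : ∀ l : ZMod N, Summable (fun n : ℕ => a n *
      (((if k + ((n+1 : ℕ) : ZMod N) = l then (1:ℂ) else 0)
        + (if k - ((n+1 : ℕ) : ZMod N) = l then 1 else 0)) * eV N ν l)) := by
    intro l
    apply summable_aux _ 2
    intro n
    rw [norm_mul, eV_norm, mul_one]
    calc ‖(if k + ((n+1 : ℕ) : ZMod N) = l then (1:ℂ) else 0)
        + (if k - ((n+1 : ℕ) : ZMod N) = l then 1 else 0)‖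
        ≤ ‖(if k + ((n+1 : ℕ) : ZMod N) = l then (1:ℂ) else 0)‖
          + ‖(if k - ((n+1 : ℕ) : ZMod N) = l then (1:ℂ) else 0)‖ := norm_add_le _ _
      _ ≤ 1 + 1 := by
          apply add_le_add <;> split <;> simp
      _ = 2 := by norm_num
  have hlhs : (opAMat N ℓ).mulVec (eV N ν) k = ∑ l, opAMat N ℓ k l * eV N ν l := rfl
  have body : ∀ l, opAMat N ℓ k l * eV N ν l
      = c * (if k = l then (1:ℂ) else 0) * eV N ν l
        + d * ∑' n, a n * (((if k + ((n+1 : ℕ) : ZMod N) = l then (1:ℂ) else 0)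
            + (if k - ((n+1 : ℕ) : ZMod N) = l then 1 else 0)) * eV N ν l) := by
    intro l
    show (c * _ + d * _) * eV N ν l = _
    rw [add_mul, mul_assoc d _ _, ← tsum_mul_right]
    congr 2
    exact tsum_congr fun n => by ring
  have h1 : ∑ l, c * (if k = l then (1:ℂ) else 0) * eV N ν l = c * eV N ν k := by
    rw [Finset.sum_eq_single k]
    · simp
    · intro b _ hb
      simp [Ne.symm hb]
    · simp
  have h2 : ∀ n : ℕ, (∑ l, a n * (((if k + ((n+1 : ℕ) : ZMod N) = l then (1:ℂ) else 0)
        + (if k - ((n+1 : ℕ) : ZMod N) = l then 1 else 0)) * eV N ν l))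
      = eV N ν k * (a n * (chi N (ν * ((n+1 : ℕ) : ZMod N)) + chi N (-(ν * ((n+1 : ℕ) : ZMod N))))) := by
    intro n
    rw [← Finset.mul_sum]
    have : (∑ l, (((if k + ((n+1 : ℕ) : ZMod N) = l then (1:ℂ) else 0)
        + (if k - ((n+1 : ℕ) : ZMod N) = l then 1 else 0)) * eV N ν l))
        = eV N ν (k + ((n+1 : ℕ) : ZMod N)) + eV N ν (k - ((n+1 : ℕ) : ZMod N)) := by
      simp only [add_mul, Finset.sum_add_distrib, ite_mul, one_mul, zero_mul,
        Finset.sum_ite_eq, Finset.mem_univ, if_true]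
    rw [this, eV_add, eV_sub]
    ring
  rw [hlhs]
  calc ∑ l, opAMat N ℓ k l * eV N ν l
      = (∑ l, c * (if k = l then (1:ℂ) else 0) * eV N ν l)
        + ∑ l, d * ∑' n, a n * (((if k + ((n+1 : ℕ) : ZMod N) = l then (1:ℂ) else 0)
            + (if k - ((n+1 : ℕ) : ZMod N) = l then 1 else 0)) * eV N ν l) := by
        rw [← Finset.sum_add_distrib]
        exact Finset.sum_congr rfl fun l _ => body l
    _ = c * eV N ν k + d * ∑' n, ∑ l, a n * (((if k + ((n+1 : ℕ) : ZMod N) = l then (1:ℂ) else 0)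
            + (if k - ((n+1 : ℕ) : ZMod N) = l then 1 else 0)) * eV N ν l) := by
        rw [h1, ← Finset.mul_sum, Summable.tsum_finsetSum (fun l _ => hsum l)]
    _ = c * eV N ν k + d * (eV N ν k * ∑' n, (a n * (chi N (ν * ((n+1 : ℕ) : ZMod N)) + chi N (-(ν * ((n+1 : ℕ) : ZMod N)))))) := by
        rw [tsum_congr h2, tsum_mul_left]
    _ = (lam N ℓ ν • eV N ν) k := by
        rw [lam, Pi.smul_apply, smul_eq_mul]
        have : (∑' n : ℕ, ((-1 : ℂ)^(n+1) / ((n : ℂ)+1)^2) *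
            (chi N (ν * ((n+1 : ℕ) : ZMod N)) + chi N (-(ν * ((n+1 : ℕ) : ZMod N)))))
            = ∑' n, (a n * (chi N (ν * ((n+1 : ℕ) : ZMod N)) + chi N (-(ν * ((n+1 : ℕ) : ZMod N))))) := by
          exact tsum_congr fun n => by rw [ha]
        rw [this]
        ring

lemma exp_I_add_exp_neg_I (r : ℝ) :
    Complex.exp ((r:ℝ) * Complex.I) + Complex.exp ((-r : ℝ) * Complex.I)
      = ((2 * Real.cos r : ℝ) : ℂ) := by
  rw [Complex.exp_mul_I, Complex.exp_mul_I]
  push_cast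
  simp only [Complex.cos_neg, Complex.sin_neg]
  ring

lemma lam_eq (ℓ : ℝ) (ν' : ℤ) (h1 : -(N:ℤ) ≤ 2*ν') (h2 : 2*ν' ≤ N) :
    lam N ℓ ((ν' : ZMod N)) = ((((ν' : ℝ) * ℓ / N)^2 : ℝ) : ℂ) := by
  have hNpos : 0 < (N : ℝ) := by
    exact_mod_cast Nat.pos_of_ne_zero (NeZero.ne N)
  have hπ := Real.pi_pos
  set θ : ℝ := 2 * Real.pi * ν' / N with hθdef
  have h1' : -(N:ℝ) ≤ 2*(ν' : ℝ) := by exact_mod_cast h1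
  have h2' : 2*(ν' : ℝ) ≤ (N:ℝ) := by exact_mod_cast h2
  have hθ : θ ∈ Set.Icc (-Real.pi) Real.pi := by
    constructor
    · rw [hθdef, le_div_iff₀ hNpos]
      nlinarith
    · rw [hθdef, div_le_iff₀ hNpos]
      nlinarith
  have hR := cos_alt_sum hθ
  have hf0 : (-1 : ℝ)^(0:ℕ) / ((0:ℕ) : ℝ) ^ 2 * Real.cos ((0:ℕ) * θ) = 0 := by
    norm_num
  have hR1 : HasSum (fun n : ℕ => (-1 : ℝ)^((n+1:ℕ)) / ((n+1:ℕ) : ℝ) ^ 2 * Real.cos ((n+1:ℕ) * θ))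
      (θ^2/4 - Real.pi^2/12 - ∑ i ∈ Finset.range 1, (-1 : ℝ)^i / (i : ℝ) ^ 2 * Real.cos (i * θ)) :=
    (hasSum_nat_add_iff' 1).mpr hR
  rw [Finset.sum_range_one] at hR1
  rw [hf0, sub_zero] at hR1
  have hR2 := hR1.mul_left 2
  have hC := Complex.ofRealCLM.hasSum hR2
  have hterm : ∀ n : ℕ, Complex.ofRealCLM (2 * ((-1 : ℝ)^((n+1:ℕ)) / ((n+1:ℕ) : ℝ) ^ 2 * Real.cos ((n+1:ℕ) * θ)))
      = ((-1 : ℂ)^(n+1) / ((n : ℂ)+1)^2) *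
        (chi N (((ν' : ZMod N)) * ((n+1 : ℕ) : ZMod N)) + chi N (-(((ν' : ZMod N)) * ((n+1 : ℕ) : ZMod N)))) := by
    intro n
    have e1 : ((ν' : ZMod N)) * ((n+1 : ℕ) : ZMod N) = (((ν' * ((n+1:ℕ) : ℤ) : ℤ)) : ZMod N) := by
      push_cast
      ring
    have e2 : -((((ν' * ((n+1:ℕ) : ℤ) : ℤ)) : ZMod N)) = (((-(ν' * ((n+1:ℕ) : ℤ)) : ℤ)) : ZMod N) := by
      push_cast
      ring
    rw [e1, e2, chi_int, chi_int]
    have r1 : (2 * Real.pi * (((ν' * ((n+1:ℕ) : ℤ) : ℤ)) : ℝ) / N : ℝ) = (((n+1:ℕ)) : ℝ) * θ := by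
      rw [hθdef]
      push_cast
      ring
    have r2 : (2 * Real.pi * (((-(ν' * ((n+1:ℕ) : ℤ)) : ℤ)) : ℝ) / N : ℝ) = -((((n+1:ℕ)) : ℝ) * θ) := by
      rw [hθdef]
      push_cast
      ring
    rw [r1, r2, exp_I_add_exp_neg_I]
    simp only [Complex.ofRealCLM_apply]
    push_cast
    ring
  have htsum := (hC.congr_fun (fun n => (hterm n).symm)).tsum_eq
  rw [lam, htsum]
  simp only [Complex.ofRealCLM_apply]
  rw [← Complex.ofReal_mul, ← Complex.ofReal_add]
  congr 1
  rw [hθdef]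
  field_simp
  ring

lemma spec_eq (ℓ : ℝ) : spectrum ℂ (opAMat N ℓ) = Set.range (lam N ℓ) := by
  have h1 : spectrum ℂ (opAMat N ℓ) = spectrum ℂ (Matrix.toLinAlgEquiv' (opAMat N ℓ)) :=
    (AlgEquiv.spectrum_eq Matrix.toLinAlgEquiv' (opAMat N ℓ)).symm
  have h2 : spectrum ℂ (Matrix.toLinAlgEquiv' (opAMat N ℓ))
      = spectrum ℂ ((LinearMap.toMatrixAlgEquiv (eBasis N)) (Matrix.toLinAlgEquiv' (opAMat N ℓ))) :=
    (AlgEquiv.spectrum_eq _ _).symm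
  have h3 : (LinearMap.toMatrixAlgEquiv (eBasis N)) (Matrix.toLinAlgEquiv' (opAMat N ℓ))
      = Matrix.diagonal (lam N ℓ) := by
    ext i j
    rw [LinearMap.toMatrixAlgEquiv_apply]
    have hb : Matrix.toLinAlgEquiv' (opAMat N ℓ) (eBasis N j) = lam N ℓ j • eBasis N j := by
      rw [eBasis_apply]
      show (opAMat N ℓ).mulVec (eV N j) = _
      rw [mulVec_eV]
    rw [hb, map_smul, Module.Basis.repr_self]
    simp only [Finsupp.smul_single, smul_eq_mul, mul_one, Finsupp.single_apply,
      Matrix.diagonal]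
    by_cases h : i = j
    · subst h; simp
    · simp [h, Ne.symm h]
  rw [h1, h2, h3, spectrum_diagonal]

end SpecOpA

open SpecOpA

/-- the spectrum of op_N(a) consists exactly of the values (νℓ/N)²,
ν ∈ ℤ, -N/2 ≤ ν < N/2; in particular its infimum is 0 and its supremum is ℓ²/4 for
even N and (ℓ²/4)((N-1)/N)² for odd N. -/
theorem spectrum_opA (N : ℕ) [NeZero N] (ℓ : ℝ) (hℓ : 0 < ℓ)
    (S : Set ℝ)
    (hS : S = {x : ℝ | ∃ ν : ℤ, -(N : ℤ) ≤ 2*ν ∧ 2*ν < (N : ℤ) ∧ x = ((ν : ℝ) * ℓ / N)^2}) :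
    spectrum ℂ (opAMat N ℓ) = (fun x : ℝ => (x : ℂ)) '' S
    ∧ sInf S = 0
    ∧ sSup S = (if Even N then ℓ^2/4 else ℓ^2/4 * (((N : ℝ)-1)/N)^2) := by
  have hN : 0 < N := Nat.pos_of_ne_zero (NeZero.ne N)
  have hNZ : (0:ℤ) < (N:ℤ) := by exact_mod_cast hN
  have hNR : (0:ℝ) < (N:ℝ) := by exact_mod_cast hN
  subst hS
  refine ⟨?_, ?_, ?_⟩
  · rw [spec_eq]
    ext z
    constructor
    · rintro ⟨ν, rfl⟩
      set μ := ν.valMinAbs with hμ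
      obtain ⟨hm1, hm2⟩ := ZMod.valMinAbs_mem_Ioc ν
      have hcast : ((μ : ℤ) : ZMod N) = ν := ZMod.coe_valMinAbs ν
      have hlam : lam N ℓ ν = ((((μ : ℝ) * ℓ / N)^2 : ℝ) : ℂ) := by
        rw [← hcast]
        exact lam_eq N ℓ μ (by omega) (by omega)
      rcases lt_or_ge (2*μ) (N:ℤ) with hlt | hge
      · exact ⟨((μ : ℝ) * ℓ / N)^2, ⟨μ, by omega, hlt, rfl⟩, hlam.symm⟩
      · have h2μ : 2*μ = N := by omega
        refine ⟨((μ : ℝ) * ℓ / N)^2, ⟨-μ, by omega, by omega, ?_⟩, hlam.symm⟩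
        push_cast
        ring
    · rintro ⟨x, ⟨ν, hν1, hν2, rfl⟩, rfl⟩
      exact ⟨((ν : ℤ) : ZMod N), lam_eq N ℓ ν hν1 hν2.le⟩
  · have h0 : (0:ℝ) ∈ {x : ℝ | ∃ ν : ℤ, -(N : ℤ) ≤ 2*ν ∧ 2*ν < (N : ℤ) ∧ x = ((ν : ℝ) * ℓ / N)^2} := by
      exact ⟨0, by omega, by omega, by norm_num⟩
    have hlb : ∀ x ∈ {x : ℝ | ∃ ν : ℤ, -(N : ℤ) ≤ 2*ν ∧ 2*ν < (N : ℤ) ∧ x = ((ν : ℝ) * ℓ / N)^2},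
        (0:ℝ) ≤ x := by
      rintro x ⟨ν, _, _, rfl⟩
      positivity
    exact le_antisymm (csInf_le ⟨0, hlb⟩ h0) (le_csInf ⟨0, h0⟩ hlb)
  · by_cases hpar : Even N
    · rw [if_pos hpar]
      obtain ⟨t, ht⟩ := hpar
      have htpos : 0 < t := by omega
      apply IsGreatest.csSup_eq
      constructor
      · refine ⟨-(t:ℤ), by omega, by omega, ?_⟩
        have hNt : (N:ℝ) = 2*t := by
          push_cast [ht]; ring
        rw [hNt]
        have ht0 : ((t:ℝ)) ≠ 0 := by positivity
        field_simp
        push_cast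
        ring
      · rintro x ⟨ν, hν1, hν2, rfl⟩
        have hsq : ((ν:ℝ))^2 * 4 ≤ ((N:ℝ))^2 := by
          have h : (2*ν)^2 ≤ ((N:ℤ))^2 := by nlinarith
          have h' : (((2*ν)^2 : ℤ) : ℝ) ≤ (((N:ℤ)^2 : ℤ) : ℝ) := by exact_mod_cast h
          push_cast at h'
          nlinarith
        rw [div_pow, div_le_div_iff₀ (by positivity) (by norm_num)]
        calc ((ν:ℝ) * ℓ)^2 * 4 = ((ν:ℝ))^2 * 4 * ℓ^2 := by ring
          _ ≤ ((N:ℝ))^2 * ℓ^2 := by nlinarith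
          _ = ℓ^2 * (N:ℝ)^2 := by ring
    · rw [if_neg hpar]
      rw [Nat.not_even_iff_odd] at hpar
      obtain ⟨t, ht⟩ := hpar
      have hNt : (N:ℝ) = 2*t+1 := by push_cast [ht]; ring
      apply IsGreatest.csSup_eq
      constructor
      · refine ⟨(t:ℤ), by omega, by omega, ?_⟩
        rw [hNt]
        have h2t : (2*(t:ℝ)+1) ≠ 0 := by positivity
        field_simp
        push_cast
        ring
      · rintro x ⟨ν, hν1, hν2, rfl⟩
        have hb : -(t:ℤ) ≤ ν ∧ ν ≤ t := by omega
        have hsq : ((ν:ℝ))^2 ≤ ((t:ℝ))^2 := by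
          have : ν^2 ≤ (t:ℤ)^2 := by nlinarith [hb.1, hb.2]
          exact_mod_cast this
        have hN1 : ((N:ℝ)-1) = 2*t := by rw [hNt]; ring
        rw [div_pow, div_le_iff₀ (by positivity), hN1]
        have expand : ℓ^2/4 * (2*(t:ℝ)/N)^2 * (N:ℝ)^2 = (t:ℝ)^2 * ℓ^2 := by
          field_simp
          ring
        rw [expand]
        nlinarith
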